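/- arXiv:1301.3659 — 8 statements merged into one kernel-verified Lean document; each statement's English description precedes it below -/
import Mathlib

section
/- For every real number s > 1, the Riemann zeta function satisfies ζ(s) = lim_{q→∞} (π/(2q))^s · Σ_{p=1}^{q} cot^s(pπ/(2q+1)). -/
open Real Filter Finset

lemma cot_pos_aux {x : ℝ} (h1 : 0 < x) (h2 : x < π / 2) : 0 < Real.cot x := by
  rw [Real.cot_eq_cos_div_sin]
  exact div_pos (Real.cos_pos_of_mem_Ioo ⟨by linarith [Real.pi_pos], h2⟩)
    (Real.sin_pos_of_pos_of_lt_pi h1 (by linarith [Real.pi_pos]))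

lemma cot_le_inv_aux {x : ℝ} (h1 : 0 < x) (h2 : x < π / 2) : Real.cot x ≤ 1 / x := by
  have htan : x < Real.tan x := Real.lt_tan h1 h2
  have hcot : Real.cot x = 1 / Real.tan x := by
    rw [Real.cot_eq_cos_div_sin, Real.tan_eq_sin_div_cos, one_div, inv_div]
  rw [hcot]
  exact one_div_le_one_div_of_le h1 htan.le

lemma mul_cot_tendsto :
    Tendsto (fun t : ℝ => t * Real.cot t) (nhdsWithin 0 (Set.Ioi 0)) (nhds 1) := by
  have h1 : Tendsto (fun t : ℝ => Real.sin t / t) (nhdsWithin 0 {0}ᶜ) (nhds 1) := by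
    have := (Real.hasDerivAt_sin 0)
    rw [hasDerivAt_iff_tendsto_slope] at this
    simpa [slope_fun_def, Real.sin_zero, Real.cos_zero, div_eq_inv_mul] using this
  have h2 : Tendsto (fun t : ℝ => t / Real.sin t) (nhdsWithin 0 {0}ᶜ) (nhds 1) := by
    have := h1.inv₀ one_ne_zero
    simpa [inv_div] using this
  have h3 : Tendsto (fun t : ℝ => t / Real.sin t * Real.cos t) (nhdsWithin 0 {0}ᶜ) (nhds 1) := by
    have hc : Tendsto Real.cos (nhdsWithin (0:ℝ) {0}ᶜ) (nhds 1) := by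
      have := (Real.continuous_cos.tendsto 0)
      rw [Real.cos_zero] at this
      exact this.mono_left nhdsWithin_le_nhds
    simpa using h2.mul hc
  have heq : ∀ t : ℝ, t * Real.cot t = t / Real.sin t * Real.cos t := by
    intro t; rw [Real.cot_eq_cos_div_sin]; ring
  have := h3.mono_left (nhdsWithin_mono 0 (fun t ht => ne_of_gt ht))
  exact Tendsto.congr (fun t => (heq t).symm) this

lemma sum_Icc_one_aux (q : ℕ) (f : ℕ → ℝ) : ∑ p ∈ Icc 1 q, f p = ∑ i ∈ range q, f (i+1) := by
  rw [← Finset.Ico_add_one_right_eq_Icc, Finset.sum_Ico_eq_sum_range]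
  simp [add_comm]

theorem zeta_cot_limit_2q (s : ℝ) (hs : 1 < s) :
    Tendsto (fun q : ℕ =>
        (π / (2 * q)) ^ s * ∑ p ∈ Finset.Icc 1 q, (Real.cot (p * π / (2 * q + 1))) ^ s)
      atTop (nhds (∑' n : ℕ, 1 / ((n : ℝ) + 1) ^ s)) := by
  have hs0 : (0:ℝ) ≤ s := by linarith
  set F : ℕ → ℕ → ℝ := fun q n =>
    if n + 1 ≤ q then (π / (2 * q)) ^ s * (Real.cot (((n:ℝ) + 1) * π / (2 * q + 1))) ^ s else 0
    with hF
  have hFpos : ∀ q n : ℕ, n + 1 ≤ q → F q n =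
      (π / (2 * q)) ^ s * (Real.cot (((n:ℝ) + 1) * π / (2 * q + 1))) ^ s := by
    intro q n h; simp only [hF, if_pos h]
  have hFneg : ∀ q n : ℕ, ¬ (n + 1 ≤ q) → F q n = 0 := by
    intro q n h; simp only [hF, if_neg h]
  have hx_pos : ∀ q n : ℕ, 0 < ((n:ℝ)+1) * π / (2*q+1) := by
    intro q n
    have := Real.pi_pos
    positivity
  have hx_lt : ∀ q n : ℕ, n + 1 ≤ q → ((n:ℝ)+1) * π / (2*q+1) < π / 2 := by
    intro q n h
    have hq : ((n:ℝ)+1) ≤ q := by exact_mod_cast h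
    rw [div_lt_iff₀ (by positivity)]
    have := Real.pi_pos
    nlinarith
  have key : ∀ q : ℕ, (π / (2 * q)) ^ s *
      ∑ p ∈ Finset.Icc 1 q, (Real.cot (p * π / (2 * q + 1))) ^ s = ∑' n, F q n := by
    intro q
    rw [tsum_eq_sum (s := Finset.range q) (by
      intro n hn
      simp only [Finset.mem_range, not_lt] at hn
      exact hFneg q n (by omega))]
    rw [Finset.mul_sum, sum_Icc_one_aux]
    refine Finset.sum_congr rfl fun i hi => ?_
    simp only [Finset.mem_range] at hi
    rw [hFpos q i (by omega)]
    push_cast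
    ring_nf
  simp only [key]
  have hsum : Summable (fun n : ℕ => (1:ℝ)/((n:ℝ)+1)^s) := by
    have h0 : Summable (fun n : ℕ => (1:ℝ)/(n:ℝ)^s) := Real.summable_one_div_nat_rpow.2 hs
    have := (summable_nat_add_iff 1).2 h0
    simpa using this
  refine tendsto_tsum_of_dominated_convergence
    (f := F) (g := fun n : ℕ => 1 / ((n : ℝ) + 1) ^ s)
    (bound := fun n : ℕ => (3/2:ℝ)^s * (1/((n:ℝ)+1)^s)) (hsum.mul_left _) ?_ ?_
  · -- pointwise convergence
    intro n
    have hN : (0:ℝ) < (n:ℝ)+1 := by positivity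
    have t1 : Tendsto (fun q : ℕ => (2*(q:ℝ)+1)/(2*q)) atTop (nhds 1) := by
      have h2q : Tendsto (fun q : ℕ => 2*(q:ℝ)) atTop atTop :=
        (tendsto_natCast_atTop_atTop (R := ℝ)).const_mul_atTop two_pos
      have hinv := h2q.inv_tendsto_atTop
      have := (tendsto_const_nhds (x := (1:ℝ)) (f := atTop)).add hinv
      rw [add_zero] at this
      refine Tendsto.congr' ?_ this
      filter_upwards [eventually_ge_atTop 1] with q hq
      have hq' : (1:ℝ) ≤ q := by exact_mod_cast hq
      show 1 + (2*(q:ℝ))⁻¹ = (2*(q:ℝ)+1)/(2*q)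
      field_simp
    have hden : Tendsto (fun q : ℕ => 2*(q:ℝ)+1) atTop atTop :=
      tendsto_atTop_add_const_right _ 1
        ((tendsto_natCast_atTop_atTop (R := ℝ)).const_mul_atTop two_pos)
    have t2a : Tendsto (fun q : ℕ => ((n:ℝ)+1)*π/(2*q+1)) atTop (nhds 0) :=
      tendsto_const_nhds.div_atTop hden
    have t2 : Tendsto (fun q : ℕ => ((n:ℝ)+1)*π/(2*q+1)) atTop (nhdsWithin 0 (Set.Ioi 0)) :=
      tendsto_nhdsWithin_of_tendsto_nhds_of_eventually_within _ t2a
        (Eventually.of_forall fun q => hx_pos q n)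
    have t3 : Tendsto (fun q : ℕ =>
        (((n:ℝ)+1)*π/(2*q+1)) * Real.cot (((n:ℝ)+1)*π/(2*q+1))) atTop (nhds 1) :=
      mul_cot_tendsto.comp t2
    have t4 : Tendsto (fun q : ℕ => (2*(q:ℝ)+1)/(2*q) *
        ((((n:ℝ)+1)*π/(2*q+1)) * Real.cot (((n:ℝ)+1)*π/(2*q+1))) * (1/((n:ℝ)+1)))
        atTop (nhds (1/((n:ℝ)+1))) := by
      have := (t1.mul t3).mul_const (1/((n:ℝ)+1))
      simpa using this
    have t5 := ((Real.continuousAt_rpow_const (1/((n:ℝ)+1)) s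
      (Or.inl (by positivity))).tendsto.comp t4)
    rw [show ((1/((n:ℝ)+1)) ^ s) = 1 / ((n:ℝ)+1)^s by
      rw [Real.div_rpow zero_le_one hN.le, Real.one_rpow]] at t5
    refine Tendsto.congr' ?_ t5
    filter_upwards [eventually_ge_atTop (n+1)] with q hq
    have hq' : ((n:ℝ)+1) ≤ q := by exact_mod_cast hq
    have hq1 : (1:ℝ) ≤ q := by linarith
    have hx1 := hx_pos q n
    have hx2 := hx_lt q n hq
    have hcot := cot_pos_aux hx1 hx2
    have harg : (2*(q:ℝ)+1)/(2*q) *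
        ((((n:ℝ)+1)*π/(2*q+1)) * Real.cot (((n:ℝ)+1)*π/(2*q+1))) * (1/((n:ℝ)+1))
        = (π/(2*q)) * Real.cot (((n:ℝ)+1)*π/(2*q+1)) := by
      have hπ := Real.pi_pos
      field_simp
    simp only [Function.comp]
    rw [hFpos q n hq, harg, Real.mul_rpow (by positivity) hcot.le]
  · -- bound
    refine Eventually.of_forall fun q => fun n => ?_
    by_cases h : n + 1 ≤ q
    · have hq' : ((n:ℝ)+1) ≤ q := by exact_mod_cast h
      have hq1 : (1:ℝ) ≤ q := by linarith [Nat.cast_nonneg (α := ℝ) n]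
      have hx1 := hx_pos q n
      have hx2 := hx_lt q n h
      have hcot := cot_pos_aux hx1 hx2
      have hN : (0:ℝ) < (n:ℝ)+1 := by positivity
      have hπ := Real.pi_pos
      rw [hFpos q n h]
      rw [Real.norm_eq_abs, abs_of_nonneg (by positivity)]
      have hle : π/(2*(q:ℝ)) * Real.cot (((n:ℝ)+1)*π/(2*q+1)) ≤ (3/2) * (1/((n:ℝ)+1)) := by
        have h1 : π/(2*(q:ℝ)) * Real.cot (((n:ℝ)+1)*π/(2*q+1)) ≤
            π/(2*(q:ℝ)) * (1/(((n:ℝ)+1)*π/(2*q+1))) :=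
          mul_le_mul_of_nonneg_left (cot_le_inv_aux hx1 hx2) (by positivity)
        have h2 : π/(2*(q:ℝ)) * (1/(((n:ℝ)+1)*π/(2*q+1))) = (2*(q:ℝ)+1)/(2*q*((n:ℝ)+1)) := by
          field_simp
        have h3 : (2*(q:ℝ)+1)/(2*q*((n:ℝ)+1)) ≤ (3/2) * (1/((n:ℝ)+1)) := by
          rw [mul_one_div, div_div]
          rw [div_le_div_iff₀ (by positivity) (by positivity)]
          nlinarith
        calc π/(2*(q:ℝ)) * Real.cot (((n:ℝ)+1)*π/(2*q+1))
            ≤ π/(2*(q:ℝ)) * (1/(((n:ℝ)+1)*π/(2*q+1))) := h1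
          _ = (2*(q:ℝ)+1)/(2*q*((n:ℝ)+1)) := h2
          _ ≤ (3/2) * (1/((n:ℝ)+1)) := h3
      calc (π/(2*(q:ℝ)))^s * (Real.cot (((n:ℝ)+1)*π/(2*q+1)))^s
          = (π/(2*(q:ℝ)) * Real.cot (((n:ℝ)+1)*π/(2*q+1)))^s :=
            (Real.mul_rpow (by positivity) hcot.le).symm
        _ ≤ ((3/2) * (1/((n:ℝ)+1)))^s := Real.rpow_le_rpow (by positivity) hle hs0
        _ = (3/2:ℝ)^s * (1/((n:ℝ)+1)^s) := by
            rw [Real.mul_rpow (by norm_num) (by positivity),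
              Real.div_rpow zero_le_one hN.le, Real.one_rpow]
    · rw [hFneg q n h, norm_zero]
      positivity
end

section
/- For every real number s > 1, ζ(s) = lim_{q→∞} (π/(2q))^s · Σ_{p=1}^{q} csc^s(pπ/(2q+1)). -/
open Real Filter Finset

private lemma sin_div_lim : Tendsto (fun x : ℝ => Real.sin x / x) (nhdsWithin 0 {(0:ℝ)}ᶜ) (nhds 1) := by
  have h := Real.hasDerivAt_sin 0
  rw [hasDerivAt_iff_tendsto_slope] at h
  simp only [Real.cos_zero] at h
  refine h.congr fun x => ?_
  simp [slope_def_field]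

theorem zeta_csc_limit_2q (s : ℝ) (hs : 1 < s) :
    Tendsto (fun q : ℕ =>
        (π / (2 * q)) ^ s * ∑ p ∈ Finset.Icc 1 q, ((Real.sin (p * π / (2 * q + 1)))⁻¹) ^ s)
      atTop (nhds (∑' n : ℕ, 1 / ((n : ℝ) + 1) ^ s)) := by
  have hs0 : (0:ℝ) ≤ s := le_of_lt (lt_trans zero_lt_one hs)
  set F : ℕ → ℕ → ℝ := fun q n =>
    if n + 1 ≤ q then (π / (2 * q)) ^ s * ((Real.sin (((n:ℝ)+1) * π / (2 * q + 1)))⁻¹) ^ s else 0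
    with hF
  -- Step A : the expression equals the tsum of F q
  have stepA : ∀ q : ℕ, (π / (2 * (q:ℝ))) ^ s *
      ∑ p ∈ Finset.Icc 1 q, ((Real.sin ((p:ℝ) * π / (2 * q + 1)))⁻¹) ^ s = ∑' n, F q n := by
    intro q
    have hsum : ∑' n, F q n = ∑ n ∈ Finset.range q, F q n := by
      refine tsum_eq_sum ?_
      intro n hn
      rw [Finset.mem_range, not_lt] at hn
      simp only [hF]
      rw [if_neg (by omega)]
    rw [hsum, Finset.mul_sum]
    have : Finset.Icc 1 q = Finset.Ico 1 (q+1) := by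
      rw [Finset.Ico_add_one_right_eq_Icc]
    rw [this, Finset.sum_Ico_eq_sum_range]
    simp only [Nat.add_sub_cancel]
    refine Finset.sum_congr rfl fun n hn => ?_
    rw [Finset.mem_range] at hn
    simp only [hF]
    rw [if_pos (by omega)]
    push_cast
    ring_nf
  -- pointwise limits
  have stepC : ∀ n : ℕ, Tendsto (fun q => F q n) atTop (nhds (1 / ((n:ℝ)+1) ^ s)) := by
    intro n
    set h : ℕ → ℝ := fun q => ((n:ℝ)+1) * π / (2 * q + 1) with hh
    have hn1 : (0:ℝ) < (n:ℝ) + 1 := by positivity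
    have hhto : Tendsto h atTop (nhdsWithin 0 {(0:ℝ)}ᶜ) := by
      have h1 : Tendsto (fun q : ℕ => 2 * (q:ℝ) + 1) atTop atTop := by
        apply Filter.tendsto_atTop_add_const_right
        exact (tendsto_natCast_atTop_atTop).const_mul_atTop (by norm_num)
      have h2 : Tendsto h atTop (nhds 0) := by
        have := h1.inv_tendsto_atTop
        have := this.const_mul (((n:ℝ)+1) * π)
        simpa [hh, mul_zero, div_eq_mul_inv] using this
      refine tendsto_nhdsWithin_of_tendsto_nhds_of_eventually_within _ h2 ?_
      filter_upwards [eventually_ge_atTop 0] with q _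
      have : 0 < h q := by
        have : (0:ℝ) < 2 * q + 1 := by positivity
        positivity
      exact ne_of_gt this
    have hratio : Tendsto (fun q => (Real.sin (h q) / h q)⁻¹) atTop (nhds 1) := by
      have := (sin_div_lim.comp hhto).inv₀ one_ne_zero
      simpa using this
    have hA : Tendsto (fun q : ℕ => (2*(q:ℝ)+1) / ((2*q) * ((n:ℝ)+1))) atTop
        (nhds (1 / ((n:ℝ)+1))) := by
      have hq2 : Tendsto (fun q : ℕ => 1 + (2*(q:ℝ))⁻¹) atTop (nhds 1) := by
        have h1 : Tendsto (fun q : ℕ => 2 * (q:ℝ)) atTop atTop :=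
          (tendsto_natCast_atTop_atTop).const_mul_atTop (by norm_num)
        have := h1.inv_tendsto_atTop
        simpa using tendsto_const_nhds.add this
      have := hq2.mul (tendsto_const_nhds (x := ((n:ℝ)+1)⁻¹))
      rw [one_mul] at this
      refine Tendsto.congr' ?_ (by simpa [one_div] using this)
      filter_upwards [eventually_ge_atTop 1] with q hq
      have hq0 : (0:ℝ) < (q:ℝ) := by exact_mod_cast hq
      field_simp
    have hL : Tendsto (fun q : ℕ => π / (2 * (q:ℝ)) * (Real.sin (h q))⁻¹) atTop
        (nhds (1 / ((n:ℝ)+1))) := by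
      have := hA.mul hratio
      rw [mul_one] at this
      refine Tendsto.congr' ?_ this
      filter_upwards [eventually_ge_atTop 1] with q hq
      have hq0 : (0:ℝ) < (q:ℝ) := by exact_mod_cast hq
      have hq1 : (0:ℝ) < 2 * q + 1 := by positivity
      have hhq : 0 < h q := by rw [hh]; positivity
      rw [inv_div, div_eq_mul_inv (h q), ← mul_assoc]
      congr 1
      rw [hh]
      field_simp
    have hLs : Tendsto (fun q : ℕ => (π / (2 * (q:ℝ)) * (Real.sin (h q))⁻¹) ^ s) atTop
        (nhds ((1 / ((n:ℝ)+1)) ^ s)) := hL.rpow_const (Or.inr hs0)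
    have hrw : (1 / ((n:ℝ)+1)) ^ s = 1 / ((n:ℝ)+1) ^ s := by
      rw [one_div, Real.inv_rpow (by positivity), one_div]
    rw [← hrw]
    refine Tendsto.congr' ?_ hLs
    filter_upwards [eventually_ge_atTop (n+1)] with q hq
    have hq0 : (0:ℝ) < (q:ℝ) := by
      have : 1 ≤ q := le_trans (by omega) hq
      exact_mod_cast this
    have hx1 : 0 < h q := by
      have : (0:ℝ) < 2 * q + 1 := by positivity
      rw [hh]; positivity
    have hx2 : h q < π := by
      have hq1 : (0:ℝ) < 2 * q + 1 := by positivity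
      rw [hh, div_lt_iff₀ hq1]
      have hc : ((n:ℝ)+1) ≤ q := by exact_mod_cast hq
      nlinarith [Real.pi_pos]
    have hsin : 0 < Real.sin (h q) := Real.sin_pos_of_pos_of_lt_pi hx1 hx2
    simp only [hF]
    rw [if_pos hq]
    rw [Real.mul_rpow (by positivity) (le_of_lt (inv_pos.mpr hsin))]
  -- summable bound
  have hsummable : Summable (fun n : ℕ => 1 / ((n:ℝ)+1) ^ s) := by
    have h0 : Summable (fun n : ℕ => 1 / (n:ℝ) ^ s) :=
      Real.summable_one_div_nat_rpow.mpr hs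
    have := (summable_nat_add_iff 1).mpr h0
    refine this.congr fun n => ?_
    push_cast
    ring_nf
  have hbs : Summable (fun n : ℕ => (3*π/4) ^ s * (1 / ((n:ℝ)+1) ^ s)) :=
    hsummable.mul_left _
  -- the bound
  have h_bound : ∀ᶠ q in atTop, ∀ n : ℕ,
      ‖F q n‖ ≤ (3*π/4) ^ s * (1 / ((n:ℝ)+1) ^ s) := by
    filter_upwards [eventually_ge_atTop 1] with q hq n
    have hq0 : (0:ℝ) < (q:ℝ) := by exact_mod_cast hq
    have hq1 : (1:ℝ) ≤ (q:ℝ) := by exact_mod_cast hq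
    have hn1 : (0:ℝ) < (n:ℝ) + 1 := by positivity
    have hbnd0 : (0:ℝ) ≤ (3*π/4) ^ s * (1 / ((n:ℝ)+1) ^ s) := by
      have := Real.pi_pos
      positivity
    simp only [hF]
    by_cases hc : n + 1 ≤ q
    · rw [if_pos hc]
      set x : ℝ := ((n:ℝ)+1) * π / (2 * q + 1) with hx
      have hcr : ((n:ℝ)+1) ≤ q := by exact_mod_cast hc
      have hq2 : (0:ℝ) < 2 * q + 1 := by positivity
      have hx1 : 0 < x := by rw [hx]; positivity
      have hx2 : x ≤ π / 2 := by
        rw [hx, div_le_div_iff₀ hq2 (by norm_num)]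
        nlinarith [Real.pi_pos]
      have hlb : 2 / π * x ≤ Real.sin x := Real.mul_le_sin hx1.le hx2
      have hlb0 : 0 < 2 / π * x := by
        have := Real.pi_pos
        positivity
      have hsin : 0 < Real.sin x := lt_of_lt_of_le hlb0 hlb
      have heq : 2 / π * x = 2 * ((n:ℝ)+1) / (2 * q + 1) := by
        rw [hx]
        have := Real.pi_pos
        field_simp
      have hinv : (Real.sin x)⁻¹ ≤ (2 * q + 1) / (2 * ((n:ℝ)+1)) := by
        have h1 : (Real.sin x)⁻¹ ≤ (2 / π * x)⁻¹ :=
          inv_anti₀ hlb0 hlb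
        calc (Real.sin x)⁻¹ ≤ (2 / π * x)⁻¹ := h1
          _ = (2 * q + 1) / (2 * ((n:ℝ)+1)) := by rw [heq, inv_div]
      have hnorm : ‖(π / (2 * (q:ℝ))) ^ s * ((Real.sin x)⁻¹) ^ s‖
          = (π / (2 * (q:ℝ))) ^ s * ((Real.sin x)⁻¹) ^ s := by
        rw [Real.norm_eq_abs, abs_of_nonneg]
        have h2 : (0:ℝ) ≤ (π / (2 * (q:ℝ))) ^ s := Real.rpow_nonneg (by positivity) s
        have h3 : (0:ℝ) ≤ ((Real.sin x)⁻¹) ^ s := Real.rpow_nonneg (by positivity) s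
        exact mul_nonneg h2 h3
      rw [hnorm]
      have step1 : (π / (2 * (q:ℝ))) ^ s * ((Real.sin x)⁻¹) ^ s
          ≤ (π / (2 * (q:ℝ))) ^ s * ((2 * q + 1) / (2 * ((n:ℝ)+1))) ^ s := by
        refine mul_le_mul_of_nonneg_left ?_ (Real.rpow_nonneg (by positivity) s)
        exact Real.rpow_le_rpow (by positivity) hinv hs0
      have step2 : (π / (2 * (q:ℝ))) ^ s * ((2 * q + 1) / (2 * ((n:ℝ)+1))) ^ s
          = (π / (2 * (q:ℝ)) * ((2 * q + 1) / (2 * ((n:ℝ)+1)))) ^ s := by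
        rw [← Real.mul_rpow (by positivity) (by positivity)]
      have step3 : (π / (2 * (q:ℝ)) * ((2 * q + 1) / (2 * ((n:ℝ)+1)))) ^ s
          ≤ (3*π/4 * (1 / ((n:ℝ)+1))) ^ s := by
        refine Real.rpow_le_rpow (by positivity) ?_ hs0
        rw [div_mul_div_comm, div_mul_div_comm, div_le_div_iff₀ (by positivity) (by positivity)]
        nlinarith [mul_nonneg (mul_nonneg Real.pi_pos.le hn1.le) (sub_nonneg.mpr hq1)]
      have step4 : (3*π/4 * (1 / ((n:ℝ)+1))) ^ s = (3*π/4) ^ s * (1 / ((n:ℝ)+1) ^ s) := by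
        rw [Real.mul_rpow (by positivity) (by positivity), one_div,
          Real.inv_rpow (by positivity), one_div]
      calc (π / (2 * (q:ℝ))) ^ s * ((Real.sin x)⁻¹) ^ s
          ≤ (π / (2 * (q:ℝ))) ^ s * ((2 * q + 1) / (2 * ((n:ℝ)+1))) ^ s := step1
        _ = (π / (2 * (q:ℝ)) * ((2 * q + 1) / (2 * ((n:ℝ)+1)))) ^ s := step2
        _ ≤ (3*π/4 * (1 / ((n:ℝ)+1))) ^ s := step3
        _ = (3*π/4) ^ s * (1 / ((n:ℝ)+1) ^ s) := step4
    · rw [if_neg hc]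
      simpa using hbnd0
  have main := tendsto_tsum_of_dominated_convergence hbs stepC h_bound
  exact (tendsto_congr stepA).mpr main
end

section
/- For every real number s > 1, ζ(s) = lim_{q→∞} (π/(2q))^s · Σ_{p=1}^{q-1} csc^s(pπ/(2q)). -/
open Real Filter Finset

noncomputable def fq (s : ℝ) (q k : ℕ) : ℝ :=
  if k + 1 ≤ q - 1 then
    (π / (2 * (q:ℝ))) ^ s * ((Real.sin (((k:ℝ) + 1) * π / (2 * (q:ℝ))))⁻¹) ^ s
  else 0

lemma sin_div_self_tendsto : Tendsto (fun y : ℝ => Real.sin y / y) (nhdsWithin 0 {0}ᶜ) (nhds 1) := by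
  have h := (Real.hasDerivAt_sin 0)
  rw [hasDerivAt_iff_tendsto_slope] at h
  simpa [slope_fun_def_field, Real.cos_zero] using h

lemma fq_tendsto (s : ℝ) (hs : 1 < s) (k : ℕ) :
    Tendsto (fun q : ℕ => fq s q k) atTop (nhds (1 / ((k:ℝ) + 1) ^ s)) := by
  set p : ℝ := (k:ℝ) + 1 with hpdef
  have hp0 : (0:ℝ) < p := by positivity
  set x : ℕ → ℝ := fun q => p * π / (2 * (q:ℝ)) with hxdef
  have hx0 : Tendsto x atTop (nhds 0) := by
    have : Tendsto (fun q : ℕ => (p * π / 2) / (q:ℝ)) atTop (nhds 0) :=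
      tendsto_const_div_atTop_nhds_zero_nat _
    refine this.congr (fun q => ?_)
    rw [hxdef]; simp [div_div]
  have hxne : Tendsto x atTop (nhdsWithin 0 {0}ᶜ) := by
    apply tendsto_nhdsWithin_of_tendsto_nhds_of_eventually_within _ hx0
    filter_upwards [eventually_gt_atTop 0] with q hq
    have : 0 < x q := by
      have : (0:ℝ) < (q:ℝ) := by exact_mod_cast hq
      rw [hxdef]; positivity
    simp [ne_of_gt this]
  have hratio : Tendsto (fun q => Real.sin (x q) / x q) atTop (nhds 1) :=
    sin_div_self_tendsto.comp hxne
  have hinv : Tendsto (fun q => x q / Real.sin (x q)) atTop (nhds 1) := by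
    have := hratio.inv₀ one_ne_zero
    simp only [inv_div, inv_one] at this
    exact this
  have hbase : Tendsto (fun q => (x q / Real.sin (x q)) * p⁻¹) atTop (nhds p⁻¹) := by
    simpa using hinv.mul_const p⁻¹
  have hrpow : Tendsto (fun q => ((x q / Real.sin (x q)) * p⁻¹) ^ s) atTop (nhds (p⁻¹ ^ s)) :=
    ((Real.continuousAt_rpow_const p⁻¹ s (Or.inl (by positivity))).tendsto).comp hbase
  have hval : p⁻¹ ^ s = 1 / p ^ s := by
    rw [Real.inv_rpow hp0.le, one_div]
  rw [← hval]
  refine hrpow.congr' ?_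
  filter_upwards [eventually_ge_atTop (k + 2)] with q hq
  have hq0 : (0:ℝ) < (q:ℝ) := by
    have : 0 < q := by omega
    exact_mod_cast this
  have hcond : k + 1 ≤ q - 1 := by omega
  have hple : p ≤ (q:ℝ) := by
    have : (k:ℝ) + 2 ≤ (q:ℝ) := by exact_mod_cast hq
    rw [hpdef]; linarith
  have hxpos : 0 < x q := by rw [hxdef]; positivity
  have hxlt : x q < π := by
    rw [hxdef]
    rw [div_lt_iff₀ (by positivity)]
    have : p < 2 * (q:ℝ) := by linarith
    calc p * π < (2 * (q:ℝ)) * π := by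
          exact mul_lt_mul_of_pos_right this Real.pi_pos
      _ = π * (2 * (q:ℝ)) := by ring
  have hsinpos : 0 < Real.sin (x q) := Real.sin_pos_of_pos_of_lt_pi hxpos hxlt
  rw [fq, if_pos hcond]
  rw [← Real.mul_rpow (by positivity) (by positivity)]
  congr 1
  rw [hxdef]
  field_simp
  rw [hpdef]; ring_nf

lemma fq_bound (s : ℝ) (hs : 1 < s) (q k : ℕ) :
    ‖fq s q k‖ ≤ (π / (2 * ((k:ℝ) + 1))) ^ s := by
  rw [fq]
  split_ifs with hcond
  · have hq2 : k + 2 ≤ q := by omega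
    have hq0 : (0:ℝ) < (q:ℝ) := by
      have : 0 < q := by omega
      exact_mod_cast this
    set p : ℝ := (k:ℝ) + 1 with hpdef
    have hp0 : (0:ℝ) < p := by positivity
    have hple : p ≤ (q:ℝ) := by
      have : (k:ℝ) + 2 ≤ (q:ℝ) := by exact_mod_cast hq2
      linarith
    set x : ℝ := p * π / (2 * (q:ℝ)) with hxdef
    have hxpos : 0 < x := by positivity
    have hxle : x ≤ π / 2 := by
      rw [hxdef, div_le_div_iff₀ (by positivity) (by norm_num)]
      have := Real.pi_pos
      nlinarith
    have hsin_ge : p / (q:ℝ) ≤ Real.sin x := by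
      have h := Real.mul_le_sin hxpos.le hxle
      have : 2 / π * x = p / (q:ℝ) := by
        rw [hxdef]
        field_simp
      linarith [h, this ▸ h]
    have hsinpos : 0 < Real.sin x := lt_of_lt_of_le (by positivity) hsin_ge
    have hinv_le : (Real.sin x)⁻¹ ≤ (q:ℝ) / p := by
      rw [← inv_div p (q:ℝ)]
      exact inv_anti₀ (by positivity) hsin_ge
    have hnn : 0 ≤ (π / (2 * (q:ℝ))) ^ s * ((Real.sin x)⁻¹) ^ s := by positivity
    rw [Real.norm_eq_abs, abs_of_nonneg hnn]
    calc (π / (2 * (q:ℝ))) ^ s * ((Real.sin x)⁻¹) ^ s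
        ≤ (π / (2 * (q:ℝ))) ^ s * ((q:ℝ) / p) ^ s := by
          apply mul_le_mul_of_nonneg_left _ (by positivity)
          exact Real.rpow_le_rpow (by positivity) hinv_le (by linarith)
      _ = ((π / (2 * (q:ℝ))) * ((q:ℝ) / p)) ^ s := by
          rw [← Real.mul_rpow (by positivity) (by positivity)]
      _ = (π / (2 * p)) ^ s := by
          congr 1
          field_simp
  · simp only [norm_zero]
    positivity

lemma bound_summable (s : ℝ) (hs : 1 < s) :
    Summable (fun k : ℕ => (π / (2 * ((k:ℝ) + 1))) ^ s) := by
  have h1 : Summable (fun n : ℕ => (((n:ℝ)) ^ s)⁻¹) := Real.summable_nat_rpow_inv.mpr hs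
  have h2 : Summable (fun n : ℕ => ((((n:ℝ) + 1)) ^ s)⁻¹) := by
    have := (summable_nat_add_iff 1).mpr h1
    refine this.congr (fun n => ?_)
    push_cast
    ring_nf
  have h3 : Summable (fun n : ℕ => (π / 2) ^ s * ((((n:ℝ) + 1)) ^ s)⁻¹) := h2.mul_left _
  refine h3.congr (fun n => ?_)
  rw [← Real.inv_rpow (by positivity), ← Real.mul_rpow (by positivity) (by positivity)]
  congr 1
  field_simp

theorem zeta_csc_limit_even (s : ℝ) (hs : 1 < s) :
    Tendsto (fun q : ℕ =>
        (π / (2 * q)) ^ s * ∑ p ∈ Finset.Icc 1 (q - 1), ((Real.sin (p * π / (2 * q)))⁻¹) ^ s)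
      atTop (nhds (∑' n : ℕ, 1 / ((n : ℝ) + 1) ^ s)) := by
  have hmain : Tendsto (fun q : ℕ => ∑' k : ℕ, fq s q k) atTop
      (nhds (∑' n : ℕ, 1 / ((n : ℝ) + 1) ^ s)) :=
    tendsto_tsum_of_dominated_convergence (bound_summable s hs)
      (fun k => fq_tendsto s hs k) (Eventually.of_forall (fun q k => fq_bound s hs q k))
  refine hmain.congr (fun q => ?_)
  have h1 : ∑' k : ℕ, fq s q k = ∑ k ∈ Finset.range (q - 1), fq s q k := by
    apply tsum_eq_sum
    intro b hb
    rw [Finset.mem_range, not_lt] at hb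
    rw [fq, if_neg (by omega)]
  rw [h1, Finset.mul_sum]
  rcases Nat.eq_zero_or_pos q with rfl | hq
  · simp
  have hIcc : Finset.Icc 1 (q - 1) = Finset.Ico 1 q := by
    rw [← Finset.Ico_add_one_right_eq_Icc]
    congr 1
    omega
  rw [hIcc, Finset.sum_Ico_eq_sum_range]
  apply Finset.sum_congr rfl
  intro i hi
  rw [Finset.mem_range] at hi
  rw [fq, if_pos (by omega)]
  push_cast
  ring_nf
end

section
/- Let m, n be fixed nonnegative integers and s > 1 a real number. Then lim_{q→∞} (π/(2q+m))^s · Σ_{p=1}^{⌊(2q+n−1)/2⌋} cot^s(pπ/(2q+n)) = ζ(s), where the limit is over positive integers q (with q ≥ 2 if n = 0). -/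
open Real Filter Finset

private lemma cot_facts {x : ℝ} (hx : 0 < x) (hx2 : x < π / 2) :
    0 < Real.cot x ∧ Real.cot x ≤ 1 / x := by
  have hπ := Real.pi_pos
  have hsin : 0 < Real.sin x := Real.sin_pos_of_pos_of_lt_pi hx (by linarith)
  have hcos : 0 < Real.cos x := Real.cos_pos_of_mem_Ioo ⟨by linarith, hx2⟩
  constructor
  · rw [Real.cot_eq_cos_div_sin]; positivity
  · have htan := Real.lt_tan hx hx2
    rw [Real.tan_eq_sin_div_cos, lt_div_iff₀ hcos] at htan
    rw [Real.cot_eq_cos_div_sin, div_le_div_iff₀ hsin hx]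
    nlinarith

private lemma tendsto_mul_cot :
    Tendsto (fun x : ℝ => x * Real.cot x) (nhdsWithin (0:ℝ) {0}ᶜ) (nhds 1) := by
  have hd : HasDerivAt Real.sin 1 0 := by simpa using Real.hasDerivAt_sin 0
  have h1 : Tendsto (fun x : ℝ => Real.sin x / x) (nhdsWithin (0:ℝ) {0}ᶜ) (nhds 1) := by
    have := hasDerivAt_iff_tendsto_slope.mp hd
    refine this.congr fun x => ?_
    simp [slope_def_field]
  have h2 : Tendsto (fun x : ℝ => (Real.sin x / x)⁻¹) (nhdsWithin (0:ℝ) {0}ᶜ) (nhds 1) := by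
    simpa using h1.inv₀ one_ne_zero
  have h3 : Tendsto Real.cos (nhdsWithin (0:ℝ) {0}ᶜ) (nhds 1) := by
    simpa using (Real.continuous_cos.tendsto 0).mono_left nhdsWithin_le_nhds
  have h4 := h3.mul h2
  rw [one_mul] at h4
  refine h4.congr fun x => ?_
  rw [Real.cot_eq_cos_div_sin, inv_div]
  ring

theorem zeta_cot_limit_general (m n : ℕ) (s : ℝ) (hs : 1 < s) :
    Tendsto (fun q : ℕ =>
        (π / (2 * q + m)) ^ s *
          ∑ p ∈ Finset.Icc 1 ((2 * q + n - 1) / 2), (Real.cot (p * π / (2 * q + n))) ^ s)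
      atTop (nhds (∑' k : ℕ, 1 / ((k : ℝ) + 1) ^ s)) := by
  have hs0 : (0:ℝ) ≤ s := by linarith
  have hπ := Real.pi_pos
  -- the doubly-indexed family
  set F : ℕ → ℕ → ℝ := fun q k =>
    if k + 1 ≤ (2 * q + n - 1) / 2 then
      (π / (2 * (q:ℝ) + m)) ^ s * (Real.cot (((k:ℝ) + 1) * π / (2 * (q:ℝ) + n))) ^ s
    else 0 with hF
  -- summable bound
  have hsum0 : Summable (fun k : ℕ => 1 / ((k:ℝ) + 1) ^ s) := by
    have h := (summable_nat_add_iff (f := fun j : ℕ => 1 / (j:ℝ) ^ s) 1).mpr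
      (Real.summable_one_div_nat_rpow.mpr hs)
    refine h.congr fun k => ?_
    push_cast
    ring_nf
  have hboundsum : Summable (fun k : ℕ => (1 + (n:ℝ)) ^ s / ((k:ℝ) + 1) ^ s) := by
    have := hsum0.mul_left ((1 + (n:ℝ)) ^ s)
    refine this.congr fun k => ?_
    rw [mul_one_div]
  -- pointwise limits
  have hpoint : ∀ k : ℕ, Tendsto (fun q => F q k) atTop (nhds (1 / ((k:ℝ) + 1) ^ s)) := by
    intro k
    set p : ℝ := (k:ℝ) + 1 with hp'
    have hp : 0 < p := by positivity
    have h2qm : Tendsto (fun q : ℕ => 2 * (q:ℝ) + m) atTop atTop := by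
      apply tendsto_atTop_add_const_right
      exact (tendsto_natCast_atTop_atTop).const_mul_atTop two_pos
    have h2qn : Tendsto (fun q : ℕ => 2 * (q:ℝ) + n) atTop atTop := by
      apply tendsto_atTop_add_const_right
      exact (tendsto_natCast_atTop_atTop).const_mul_atTop two_pos
    have hx : Tendsto (fun q : ℕ => p * π / (2 * (q:ℝ) + n)) atTop (nhds 0) :=
      tendsto_const_nhds.div_atTop h2qn
    have hx' : Tendsto (fun q : ℕ => p * π / (2 * (q:ℝ) + n)) atTop
        (nhdsWithin (0:ℝ) {0}ᶜ) := by
      refine tendsto_nhdsWithin_of_tendsto_nhds_of_eventually_within _ hx ?_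
      filter_upwards [eventually_ge_atTop 1] with q hq
      have hq1 : (1:ℝ) ≤ q := by exact_mod_cast hq
      have hn0 : (0:ℝ) < 2 * (q:ℝ) + n := by
        have : (0:ℝ) ≤ n := Nat.cast_nonneg n
        linarith
      have : 0 < p * π / (2 * (q:ℝ) + n) := by positivity
      simp only [Set.mem_compl_iff, Set.mem_singleton_iff]
      exact ne_of_gt this
    have hA : Tendsto (fun q : ℕ =>
        (p * π / (2 * (q:ℝ) + n)) * Real.cot (p * π / (2 * (q:ℝ) + n))) atTop (nhds 1) :=
      tendsto_mul_cot.comp hx'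
    have hC : Tendsto (fun q : ℕ => ((n:ℝ) - m) / (2 * (q:ℝ) + m)) atTop (nhds 0) :=
      tendsto_const_nhds.div_atTop h2qm
    have hR : Tendsto (fun q : ℕ => 1 + ((n:ℝ) - m) / (2 * (q:ℝ) + m)) atTop (nhds 1) := by
      simpa using tendsto_const_nhds.add hC
    have hprod : Tendsto (fun q : ℕ =>
        ((p * π / (2 * (q:ℝ) + n)) * Real.cot (p * π / (2 * (q:ℝ) + n))) *
          ((1 + ((n:ℝ) - m) / (2 * (q:ℝ) + m)) * (1 / p))) atTop (nhds (1 / p)) := by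
      simpa using hA.mul (hR.mul (tendsto_const_nhds (x := 1 / p)))
    have hbase : Tendsto (fun q : ℕ =>
        π / (2 * (q:ℝ) + m) * Real.cot (p * π / (2 * (q:ℝ) + n))) atTop (nhds (1 / p)) := by
      refine hprod.congr' ?_
      filter_upwards [eventually_ge_atTop 1] with q hq
      have hq1 : (1:ℝ) ≤ q := by exact_mod_cast hq
      have hm0 : (0:ℝ) < 2 * (q:ℝ) + m := by
        have : (0:ℝ) ≤ m := Nat.cast_nonneg m
        linarith
      have hn0 : (0:ℝ) < 2 * (q:ℝ) + n := by
        have : (0:ℝ) ≤ n := Nat.cast_nonneg n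
        linarith
      field_simp
      ring
    have hrp := hbase.rpow_const (p := s) (Or.inl (by positivity : (1 / p) ≠ 0))
    have hend : (1 / p) ^ s = 1 / ((k:ℝ) + 1) ^ s := by
      rw [hp', one_div, Real.inv_rpow (by positivity), one_div]
    rw [hend] at hrp
    refine hrp.congr' ?_
    filter_upwards [eventually_ge_atTop (k + 2)] with q hq
    have hle : k + 1 ≤ (2 * q + n - 1) / 2 := by omega
    have hlt : 2 * (k + 1) < 2 * q + n := by omega
    have hn0 : (0:ℝ) < 2 * (q:ℝ) + n := by
      have h1 : (2 * (k:ℝ) + 2 : ℝ) < 2 * (q:ℝ) + n := by exact_mod_cast hlt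
      have h2 : (0:ℝ) ≤ k := Nat.cast_nonneg k
      linarith
    have hx1 : 0 < p * π / (2 * (q:ℝ) + n) := by positivity
    have hx2 : p * π / (2 * (q:ℝ) + n) < π / 2 := by
      rw [div_lt_div_iff₀ hn0 two_pos]
      have : (2 * ((k:ℝ) + 1) : ℝ) < 2 * (q:ℝ) + n := by exact_mod_cast hlt
      nlinarith
    have hcot := (cot_facts hx1 hx2).1
    have ha : (0:ℝ) ≤ π / (2 * (q:ℝ) + m) := by positivity
    simp only [hF]
    simp only [if_pos hle]
    rw [Real.mul_rpow ha hcot.le]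
  -- the uniform bound
  have hbound : ∀ᶠ q in atTop, ∀ k, ‖F q k‖ ≤ (1 + (n:ℝ)) ^ s / ((k:ℝ) + 1) ^ s := by
    filter_upwards [eventually_ge_atTop 1] with q hq k
    have hq1 : (1:ℝ) ≤ q := by exact_mod_cast hq
    have hm0 : (0:ℝ) < 2 * (q:ℝ) + m := by
      have : (0:ℝ) ≤ m := Nat.cast_nonneg m
      linarith
    by_cases h : k + 1 ≤ (2 * q + n - 1) / 2
    · have hlt : 2 * (k + 1) < 2 * q + n := by omega
      have hn0 : (0:ℝ) < 2 * (q:ℝ) + n := by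
        have : (0:ℝ) ≤ n := Nat.cast_nonneg n
        linarith
      set x : ℝ := ((k:ℝ) + 1) * π / (2 * (q:ℝ) + n) with hxdef
      have hx1 : 0 < x := by positivity
      have hx2 : x < π / 2 := by
        rw [hxdef, div_lt_div_iff₀ hn0 two_pos]
        have : (2 * ((k:ℝ) + 1) : ℝ) < 2 * (q:ℝ) + n := by exact_mod_cast hlt
        nlinarith
      obtain ⟨hcotpos, hcotle⟩ := cot_facts hx1 hx2
      have ha : (0:ℝ) ≤ π / (2 * (q:ℝ) + m) := by positivity
      have hFval : F q k = (π / (2 * (q:ℝ) + m)) ^ s * (Real.cot x) ^ s := by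
        simp only [hF]; simp only [if_pos h]; rw [hxdef]
      have hFnonneg : 0 ≤ F q k := by
        rw [hFval]
        have := Real.rpow_nonneg ha s
        have := Real.rpow_nonneg hcotpos.le s
        positivity
      rw [Real.norm_eq_abs, abs_of_nonneg hFnonneg, hFval]
      have hBA : (2 * (q:ℝ) + n) ≤ (1 + (n:ℝ)) * (2 * (q:ℝ) + m) := by
        have hn' : (0:ℝ) ≤ n := Nat.cast_nonneg n
        have hm' : (0:ℝ) ≤ m := Nat.cast_nonneg m
        nlinarith [mul_nonneg hn' (by linarith : (0:ℝ) ≤ 2 * (q:ℝ) - 1), mul_nonneg hm' hn']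
      have hinner : π / (2 * (q:ℝ) + m) * (1 / x) ≤ (1 + (n:ℝ)) / ((k:ℝ) + 1) := by
        rw [hxdef, one_div_div, div_mul_div_comm, div_le_div_iff₀ (by positivity) (by positivity)]
        nlinarith [mul_le_mul_of_nonneg_right hBA
          (by positivity : (0:ℝ) ≤ ((k:ℝ) + 1) * π)]
      calc (π / (2 * (q:ℝ) + m)) ^ s * (Real.cot x) ^ s
          ≤ (π / (2 * (q:ℝ) + m)) ^ s * (1 / x) ^ s := by
            exact mul_le_mul_of_nonneg_left
              (Real.rpow_le_rpow hcotpos.le hcotle hs0) (Real.rpow_nonneg ha s)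
        _ = (π / (2 * (q:ℝ) + m) * (1 / x)) ^ s := (Real.mul_rpow ha (by positivity)).symm
        _ ≤ ((1 + (n:ℝ)) / ((k:ℝ) + 1)) ^ s :=
            Real.rpow_le_rpow (by positivity) hinner hs0
        _ = (1 + (n:ℝ)) ^ s / ((k:ℝ) + 1) ^ s :=
            Real.div_rpow (by positivity) (by positivity) s
    · simp only [hF]
      simp only [if_neg h, norm_zero]
      positivity
  have key := tendsto_tsum_of_dominated_convergence hboundsum hpoint hbound
  refine key.congr fun q => ?_
  -- identify the tsum with the finite sum
  rw [Finset.mul_sum]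
  rw [tsum_eq_sum (s := Finset.range ((2 * q + n - 1) / 2)) (f := F q) ?vanish]
  case vanish =>
    intro k hk
    rw [Finset.mem_range, not_lt] at hk
    simp only [hF]
    simp only [if_neg (by omega : ¬ k + 1 ≤ (2 * q + n - 1) / 2)]
  rw [← Finset.Ico_add_one_right_eq_Icc, Finset.sum_Ico_eq_sum_range]
  simp only [Nat.succ_sub_one, Nat.add_sub_cancel]
  refine Finset.sum_congr rfl fun i hi => ?_
  rw [Finset.mem_range] at hi
  simp only [hF]
  simp only [if_pos (by omega : i + 1 ≤ (2 * q + n - 1) / 2)]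
  push_cast
  ring_nf
end

section
/- Let m, n be fixed nonnegative integers and s > 1 a real number. Then lim_{q→∞} (π/(2q+m))^s · Σ_{p=1}^{⌊(2q+n−1)/2⌋} csc^s(pπ/(2q+n)) = ζ(s), where the limit is over positive integers q (with q ≥ 2 if n = 0). -/
open Real Filter Finset
open scoped Topology

set_option maxHeartbeats 1000000 in
theorem zeta_csc_limit_general (m n : ℕ) (s : ℝ) (hs : 1 < s) :
    Tendsto (fun q : ℕ =>
        (π / (2 * q + m)) ^ s *
          ∑ p ∈ Finset.Icc 1 ((2 * q + n - 1) / 2), ((Real.sin (p * π / (2 * q + n)))⁻¹) ^ s)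
      atTop (nhds (∑' k : ℕ, 1 / ((k : ℝ) + 1) ^ s)) := by
  have hs0 : (0:ℝ) < s := lt_trans one_pos hs
  set F : ℕ → ℕ → ℝ := fun q k =>
    if k + 1 ≤ (2*q+n-1)/2 then
      (π / (2*(q:ℝ)+m)) ^ s * ((Real.sin (((k:ℝ)+1) * π / (2*(q:ℝ)+n)))⁻¹) ^ s
    else 0 with hF
  have hrw : ∀ q : ℕ,
      (π / (2 * (q:ℝ) + m)) ^ s *
        ∑ p ∈ Finset.Icc 1 ((2 * q + n - 1) / 2), ((Real.sin ((p:ℝ) * π / (2 * q + n)))⁻¹) ^ s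
      = ∑' k, F q k := by
    intro q
    rw [tsum_eq_sum (s := Finset.range ((2*q+n-1)/2))
      (by
        intro k hk
        simp only [Finset.mem_range, not_lt] at hk
        have hc : ¬ (k + 1 ≤ (2*q+n-1)/2) := by omega
        simp only [hF]
        rw [if_neg hc])]
    rw [Finset.mul_sum, ← Finset.Ico_add_one_right_eq_Icc, Finset.sum_Ico_eq_sum_range]
    apply Finset.sum_congr rfl
    intro i hi
    simp only [Finset.mem_range] at hi
    have hc : 1 + i ≤ (2*q+n-1)/2 := by omega
    simp only [hF]
    rw [if_pos (by omega : i + 1 ≤ (2*q+n-1)/2)]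
    push_cast
    ring_nf
  rw [show (fun q : ℕ =>
        (π / (2 * (q:ℝ) + m)) ^ s *
          ∑ p ∈ Finset.Icc 1 ((2 * q + n - 1) / 2), ((Real.sin ((p:ℝ) * π / (2 * q + n)))⁻¹) ^ s)
      = fun q => ∑' k, F q k from funext hrw]
  -- key positivity / bound facts
  have hbd : ∀ q : ℕ, 1 ≤ q → ∀ k : ℕ, k + 1 ≤ (2*q+n-1)/2 →
      0 ≤ F q k ∧ F q k ≤ (π*(n+2)/4) ^ s / ((k:ℝ)+1) ^ s := by
    intro q hq k hk
    have hN : (2:ℝ) ≤ 2*(q:ℝ)+n := by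
      have h1 : (1:ℝ) ≤ (q:ℝ) := by exact_mod_cast hq
      have h2 : (0:ℝ) ≤ (n:ℝ) := Nat.cast_nonneg n
      linarith
    have hNpos : (0:ℝ) < 2*(q:ℝ)+n := by linarith
    have hp1 : (1:ℝ) ≤ (k:ℝ)+1 := by have := Nat.cast_nonneg (α := ℝ) k; linarith
    have h2p : 2*((k:ℝ)+1) + 1 ≤ 2*(q:ℝ)+n := by
      have : 2*(k+1) + 1 ≤ 2*q+n := by omega
      exact_mod_cast this
    set x : ℝ := ((k:ℝ)+1) * π / (2*(q:ℝ)+n) with hx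
    have hx0 : 0 < x := by positivity
    have hxle : x ≤ π/2 := by
      rw [hx, div_le_div_iff₀ hNpos (by norm_num : (0:ℝ) < 2)]
      nlinarith [pi_pos]
    have hsin : 2*((k:ℝ)+1)/(2*(q:ℝ)+n) ≤ Real.sin x := by
      have := Real.mul_le_sin hx0.le hxle
      calc 2*((k:ℝ)+1)/(2*(q:ℝ)+n) = 2/π * x := by
            rw [hx]; field_simp
        _ ≤ Real.sin x := this
    have hsinpos : 0 < Real.sin x := lt_of_lt_of_le (by positivity) hsin
    have hinv : (Real.sin x)⁻¹ ≤ (2*(q:ℝ)+n)/(2*((k:ℝ)+1)) := by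
      rw [← one_div, div_le_div_iff₀ hsinpos (by positivity)]
      calc 1 * (2*((k:ℝ)+1)) = (2*((k:ℝ)+1)/(2*(q:ℝ)+n)) * (2*(q:ℝ)+n) := by
            field_simp
        _ ≤ Real.sin x * (2*(q:ℝ)+n) := by
            apply mul_le_mul_of_nonneg_right hsin hNpos.le
        _ = (2*(q:ℝ)+n) * Real.sin x := mul_comm _ _
    have hq1 : (1:ℝ) ≤ (q:ℝ) := by exact_mod_cast hq
    have hmpos : (0:ℝ) < 2*(q:ℝ)+m := by
      have : (0:ℝ) ≤ (m:ℝ) := Nat.cast_nonneg m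
      linarith
    have hkey : (π / (2*(q:ℝ)+m)) * (Real.sin x)⁻¹ ≤ (π*(n+2)/4) / ((k:ℝ)+1) := by
      have h1 : (π / (2*(q:ℝ)+m)) * (Real.sin x)⁻¹
          ≤ (π / (2*(q:ℝ))) * ((2*(q:ℝ)+n)/(2*((k:ℝ)+1))) := by
        apply mul_le_mul
        · apply div_le_div_of_nonneg_left pi_pos.le (by linarith) (by linarith [Nat.cast_nonneg (α := ℝ) m])
        · exact hinv
        · positivity
        · positivity
      refine h1.trans ?_
      rw [div_mul_div_comm, div_le_div_iff₀ (by positivity) (by positivity)]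
      have hnq : 2*(q:ℝ)+n ≤ ((n:ℝ)+2)*(q:ℝ) := by nlinarith [Nat.cast_nonneg (α := ℝ) n]
      nlinarith [mul_le_mul_of_nonneg_left hnq (by positivity : (0:ℝ) ≤ π * ((k:ℝ)+1)), pi_pos]
    have hFq : F q k = ((π / (2*(q:ℝ)+m)) * (Real.sin x)⁻¹) ^ s := by
      simp only [hF, if_pos hk, hx]
      rw [Real.mul_rpow (by positivity) (by positivity)]
    constructor
    · rw [hFq]; positivity
    · rw [hFq, ← Real.div_rpow (by positivity) (by positivity)]
      exact Real.rpow_le_rpow (by positivity) hkey hs0.le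
  apply tendsto_tsum_of_dominated_convergence
    (bound := fun k : ℕ => (π*(n+2)/4) ^ s / ((k:ℝ)+1) ^ s)
  · -- summability
    have h1 : Summable (fun k : ℕ => 1 / ((k:ℝ)+1) ^ s) := by
      have := (Real.summable_one_div_nat_rpow (p := s)).mpr hs
      have h2 := (summable_nat_add_iff 1).mpr this
      simpa using h2
    simpa [div_eq_mul_inv, one_div] using h1.mul_left ((π*(n+2)/4) ^ s)
  · -- pointwise limit
    intro k
    have hlim : Tendsto (fun q : ℕ => (π / (2*(q:ℝ)+m)) *
        (Real.sin (((k:ℝ)+1) * π / (2*(q:ℝ)+n)))⁻¹) atTop (𝓝 (1/((k:ℝ)+1))) := by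
      have hNtop : Tendsto (fun q : ℕ => 2*(q:ℝ)+n) atTop atTop := by
        apply Filter.tendsto_atTop_add_const_right
        exact (tendsto_natCast_atTop_atTop).const_mul_atTop (by norm_num)
      have hx0 : Tendsto (fun q : ℕ => ((k:ℝ)+1) * π / (2*(q:ℝ)+n)) atTop (𝓝 0) :=
        Tendsto.div_atTop tendsto_const_nhds hNtop
      have hxne : ∀ᶠ q : ℕ in atTop, ((k:ℝ)+1) * π / (2*(q:ℝ)+n) ≠ 0 := by
        filter_upwards [eventually_ge_atTop 1] with q hq
        have hq1 : (1:ℝ) ≤ (q:ℝ) := by exact_mod_cast hq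
        positivity
      have hslope : Tendsto (fun y : ℝ => Real.sin y / y) (𝓝[≠] 0) (𝓝 1) := by
        have h := (Real.hasDerivAt_sin 0)
        rw [hasDerivAt_iff_tendsto_slope] at h
        simp only [Real.cos_zero] at h
        refine h.congr (fun y => ?_)
        simp [slope_def_field]
      have hx0' : Tendsto (fun q : ℕ => ((k:ℝ)+1) * π / (2*(q:ℝ)+n)) atTop (𝓝[≠] 0) := by
        rw [tendsto_nhdsWithin_iff]
        exact ⟨hx0, hxne⟩
      have hsinx : Tendsto (fun q : ℕ =>
          Real.sin (((k:ℝ)+1) * π / (2*(q:ℝ)+n)) / (((k:ℝ)+1) * π / (2*(q:ℝ)+n)))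
          atTop (𝓝 1) := hslope.comp hx0'
      have hratio : Tendsto (fun q : ℕ => (2*(q:ℝ)+n)/(2*(q:ℝ)+m)) atTop (𝓝 1) := by
        have hm0 : Tendsto (fun q : ℕ => (m:ℝ)/(q:ℝ)) atTop (𝓝 0) :=
          tendsto_const_div_atTop_nhds_zero_nat (m:ℝ)
        have hn0 : Tendsto (fun q : ℕ => (n:ℝ)/(q:ℝ)) atTop (𝓝 0) :=
          tendsto_const_div_atTop_nhds_zero_nat (n:ℝ)
        have := Tendsto.div ((tendsto_const_nhds (x := (2:ℝ))).add hn0)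
          ((tendsto_const_nhds (x := (2:ℝ))).add hm0) (by norm_num)
        simp only [add_zero] at this
        rw [show (1:ℝ) = 2/2 by norm_num]
        refine this.congr' ?_
        filter_upwards [eventually_ge_atTop 1] with q hq
        have hq0 : (q:ℝ) ≠ 0 := by positivity
        simp only [Pi.div_apply]
        field_simp
      have hmain := (Tendsto.inv₀ hsinx one_ne_zero).mul
        (hratio.mul (tendsto_const_nhds (x := 1/((k:ℝ)+1))))
      simp only [inv_one, one_mul] at hmain
      refine hmain.congr' ?_
      filter_upwards [eventually_ge_atTop (k+2)] with q hq
      have hq1 : (1:ℝ) ≤ (q:ℝ) := by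
        have : 1 ≤ q := by omega
        exact_mod_cast this
      have hNpos : (0:ℝ) < 2*(q:ℝ)+n := by
        have := Nat.cast_nonneg (α := ℝ) n; linarith
      have hmpos : (0:ℝ) < 2*(q:ℝ)+m := by
        have := Nat.cast_nonneg (α := ℝ) m; linarith
      have h2p : 2*((k:ℝ)+1) + 1 ≤ 2*(q:ℝ)+n := by
        have : 2*(k+1) + 1 ≤ 2*q+n := by omega
        exact_mod_cast this
      have hxpos : (0:ℝ) < ((k:ℝ)+1) * π / (2*(q:ℝ)+n) := by positivity
      have hxle : ((k:ℝ)+1) * π / (2*(q:ℝ)+n) ≤ π/2 := by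
        rw [div_le_div_iff₀ hNpos (by norm_num : (0:ℝ) < 2)]
        nlinarith [pi_pos]
      have hsinpos : 0 < Real.sin (((k:ℝ)+1) * π / (2*(q:ℝ)+n)) := by
        have := Real.mul_le_sin hxpos.le hxle
        have h2 : 0 < 2/π * (((k:ℝ)+1) * π / (2*(q:ℝ)+n)) := by positivity
        linarith
      have hk1 : ((k:ℝ)+1) ≠ 0 := by positivity
      set x := ((k:ℝ)+1) * π / (2*(q:ℝ)+n) with hxdef
      have hxN : x * ((2*(q:ℝ)+n)/((2*(q:ℝ)+m) * ((k:ℝ)+1))) = π / (2*(q:ℝ)+m) := by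
        rw [hxdef]
        field_simp
      rw [inv_div, div_mul_div_comm, mul_one]
      calc x / Real.sin x * ((2*(q:ℝ)+n)/((2*(q:ℝ)+m) * ((k:ℝ)+1)))
          = x * ((2*(q:ℝ)+n)/((2*(q:ℝ)+m) * ((k:ℝ)+1))) * (Real.sin x)⁻¹ := by
            rw [div_eq_mul_inv x]
            ring
        _ = π/(2*(q:ℝ)+m) * (Real.sin x)⁻¹ := by rw [hxN]
    -- convert to F
    have heq : ∀ᶠ q : ℕ in atTop, ((π / (2*(q:ℝ)+m)) *
        (Real.sin (((k:ℝ)+1) * π / (2*(q:ℝ)+n)))⁻¹) ^ s = F q k := by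
      filter_upwards [eventually_ge_atTop (k+2)] with q hq
      have hq1 : 1 ≤ q := by omega
      have hk : k + 1 ≤ (2*q+n-1)/2 := by omega
      have hq1' : (1:ℝ) ≤ (q:ℝ) := by exact_mod_cast hq1
      have hNpos : (0:ℝ) < 2*(q:ℝ)+n := by
        have := Nat.cast_nonneg (α := ℝ) n; linarith
      have hmpos : (0:ℝ) < 2*(q:ℝ)+m := by
        have := Nat.cast_nonneg (α := ℝ) m; linarith
      -- sin positive
      have h2p : 2*((k:ℝ)+1) + 1 ≤ 2*(q:ℝ)+n := by
        have : 2*(k+1) + 1 ≤ 2*q+n := by omega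
        exact_mod_cast this
      have hx0 : (0:ℝ) < ((k:ℝ)+1) * π / (2*(q:ℝ)+n) := by positivity
      have hxle : ((k:ℝ)+1) * π / (2*(q:ℝ)+n) ≤ π/2 := by
        rw [div_le_div_iff₀ hNpos (by norm_num : (0:ℝ) < 2)]
        nlinarith [pi_pos]
      have hsin : 0 < Real.sin (((k:ℝ)+1) * π / (2*(q:ℝ)+n)) := by
        have := Real.mul_le_sin hx0.le hxle
        have h2 : 0 < 2/π * (((k:ℝ)+1) * π / (2*(q:ℝ)+n)) := by positivity
        linarith
      simp only [hF, if_pos hk]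
      rw [Real.mul_rpow (by positivity) (by positivity)]
    have hcont : Tendsto (fun y : ℝ => y ^ s) (𝓝 (1/((k:ℝ)+1))) (𝓝 ((1/((k:ℝ)+1)) ^ s)) := by
      apply ContinuousAt.tendsto
      apply Real.continuousAt_rpow_const
      left
      positivity
    have := (hcont.comp hlim).congr' heq
    rwa [Real.div_rpow zero_le_one (by positivity), Real.one_rpow] at this
  · -- bound
    filter_upwards [eventually_ge_atTop 1] with q hq
    intro k
    by_cases hk : k + 1 ≤ (2*q+n-1)/2
    · obtain ⟨h0, h1⟩ := hbd q hq k hk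
      rwa [Real.norm_eq_abs, abs_of_nonneg h0]
    · simp only [hF, if_neg hk, norm_zero]
      positivity
end

section
/- For every positive integer n, ζ(2n) = lim_{q→∞} (π/(2q))^{2n} · Σ_{p=1}^{q} cot^{2n}(pπ/(2q+1)). -/
open Real Filter Finset

lemma xcot_tendsto : Tendsto (fun x : ℝ => x * Real.cot x) (nhdsWithin 0 {0}ᶜ) (nhds 1) := by
  have hs : Tendsto (fun x : ℝ => Real.sin x / x) (nhdsWithin 0 {0}ᶜ) (nhds 1) := by
    have h := Real.hasDerivAt_sin 0
    rw [hasDerivAt_iff_tendsto_slope] at h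
    rw [Real.cos_zero] at h
    refine h.congr fun y => ?_
    simp [slope_def_field]
  have hinv : Tendsto (fun x : ℝ => x / Real.sin x) (nhdsWithin 0 {0}ᶜ) (nhds 1) := by
    have := hs.inv₀ (by norm_num)
    simpa [one_div] using this
  have hcos : Tendsto (fun x : ℝ => Real.cos x) (nhdsWithin 0 {0}ᶜ) (nhds 1) := by
    have : Tendsto Real.cos (nhds (0:ℝ)) (nhds (Real.cos 0)) := Real.continuous_cos.tendsto 0
    rw [Real.cos_zero] at this
    exact this.mono_left nhdsWithin_le_nhds
  have := hinv.mul hcos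
  simp only [one_mul] at this
  refine this.congr (fun x => ?_)
  rw [Real.cot_eq_cos_div_sin]
  ring

lemma factor_tendsto (p : ℕ) (hp : 0 < p) :
    Tendsto (fun q : ℕ => (π / (2 * q)) * Real.cot (p * π / (2 * q + 1)))
      atTop (nhds (1 / p)) := by
  set x : ℕ → ℝ := fun q => p * π / (2 * q + 1) with hx
  have hp' : (0:ℝ) < p := by exact_mod_cast hp
  have hxpos : ∀ q : ℕ, 0 < x q := fun q => by
    apply div_pos (by positivity)
    positivity
  have hx0 : Tendsto x atTop (nhdsWithin 0 {0}ᶜ) := by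
    apply tendsto_nhdsWithin_of_tendsto_nhds_of_eventually_within
    · have h1 : Tendsto (fun q : ℕ => (2 * (q:ℝ) + 1)) atTop atTop := by
        apply Filter.tendsto_atTop_add_const_right
        exact (tendsto_natCast_atTop_atTop (R := ℝ)).const_mul_atTop two_pos
      have := h1.inv_tendsto_atTop
      have h2 := this.const_mul ((p:ℝ) * π)
      simpa [x, div_eq_mul_inv, mul_zero] using h2
    · exact Eventually.of_forall fun q => (hxpos q).ne'
  have hxc : Tendsto (fun q => x q * Real.cot (x q)) atTop (nhds 1) :=
    xcot_tendsto.comp hx0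
  have hrat : Tendsto (fun q : ℕ => (2 * (q:ℝ) + 1) / (2 * q * p)) atTop (nhds (1 / p)) := by
    have h1 : Tendsto (fun q : ℕ => (2 * (q:ℝ))⁻¹) atTop (nhds 0) :=
      ((tendsto_natCast_atTop_atTop (R := ℝ)).const_mul_atTop two_pos).inv_tendsto_atTop
    have h2 : Tendsto (fun q : ℕ => (1 + (2 * (q:ℝ))⁻¹) / p) atTop (nhds ((1 + 0) / p)) :=
      ((tendsto_const_nhds.add h1)).div_const _
    rw [add_zero] at h2
    refine h2.congr' ?_
    filter_upwards [eventually_gt_atTop 0] with q hq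
    have hq' : (0:ℝ) < (q:ℝ) := by exact_mod_cast hq
    field_simp
  have := hrat.mul hxc
  rw [mul_one] at this
  refine this.congr' ?_
  filter_upwards [eventually_gt_atTop 0] with q hq
  have hq' : (0:ℝ) < (q:ℝ) := by exact_mod_cast hq
  have h21 : (2 * (q:ℝ) + 1) ≠ 0 := by positivity
  simp only [x]
  field_simp

theorem zeta_even_cot_limit (n : ℕ) (hn : 0 < n) :
    Tendsto (fun q : ℕ =>
        (π / (2 * q)) ^ (2 * n) * ∑ p ∈ Finset.Icc 1 q, (Real.cot (p * π / (2 * q + 1))) ^ (2 * n))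
      atTop (nhds (∑' k : ℕ, 1 / ((k : ℝ) + 1) ^ (2 * n))) := by
  set F : ℕ → ℕ → ℝ := fun q k =>
    if k + 1 ≤ q then ((π / (2 * q)) * Real.cot (((k:ℝ) + 1) * π / (2 * q + 1))) ^ (2 * n)
    else 0 with hF
  set g : ℕ → ℝ := fun k => 1 / ((k : ℝ) + 1) ^ (2 * n) with hg
  set bound : ℕ → ℝ := fun k => (3 / 2 * (1 / ((k:ℝ) + 1))) ^ (2 * n) with hbound
  have hsum : Summable bound := by
    have h1 : Summable (fun k : ℕ => 1 / ((k:ℝ) + 1) ^ (2 * n)) := by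
      have := (Real.summable_one_div_nat_pow (p := 2 * n)).mpr (by omega)
      have h2 := (summable_nat_add_iff 1).mpr this
      refine h2.congr fun k => ?_
      push_cast
      ring
    refine (h1.mul_left ((3/2 : ℝ) ^ (2 * n))).congr fun k => ?_
    simp [bound, mul_pow, div_pow, one_div]
  have hpt : ∀ k : ℕ, Tendsto (F · k) atTop (nhds (g k)) := by
    intro k
    have hf := (factor_tendsto (k + 1) (Nat.succ_pos k)).pow (2 * n)
    have hlim : ((1:ℝ) / ((k:ℕ) + 1 : ℕ)) ^ (2 * n) = g k := by
      simp [g, div_pow]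
      try norm_num
    rw [hlim] at hf
    refine hf.congr' ?_
    filter_upwards [eventually_ge_atTop (k + 1)] with q hq
    simp only [F, if_pos hq]
    push_cast
    try ring_nf
  have hbd : ∀ᶠ q : ℕ in atTop, ∀ k, ‖F q k‖ ≤ bound k := by
    filter_upwards [eventually_ge_atTop 1] with q hq k
    by_cases h : k + 1 ≤ q
    · have hq' : (0:ℝ) < (q:ℝ) := by exact_mod_cast hq
      set p : ℝ := (k:ℝ) + 1 with hpdef
      have hppos : (0:ℝ) < p := by positivity
      set x : ℝ := p * π / (2 * q + 1) with hxdef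
      have hxpos : 0 < x := by positivity
      have hxlt : x < π / 2 := by
        rw [hxdef, div_lt_div_iff₀ (by positivity) two_pos]
        have hpk : p ≤ (q:ℝ) := by
          rw [hpdef]
          exact_mod_cast Nat.succ_le_of_lt (Nat.lt_of_succ_le h)
        nlinarith [Real.pi_pos]
      have hsin : 0 < Real.sin x := Real.sin_pos_of_pos_of_lt_pi hxpos
        (lt_trans hxlt (by linarith [Real.pi_pos]))
      have hcos : 0 < Real.cos x := Real.cos_pos_of_mem_Ioo
        ⟨by linarith [Real.pi_pos], hxlt⟩
      have htan : x < Real.tan x := Real.lt_tan hxpos hxlt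
      rw [Real.tan_eq_sin_div_cos, lt_div_iff₀ hcos] at htan
      have hcotpos : 0 ≤ Real.cot x := by
        rw [Real.cot_eq_cos_div_sin]
        positivity
      have hcotle : Real.cot x ≤ 1 / x := by
        rw [Real.cot_eq_cos_div_sin, div_le_div_iff₀ hsin hxpos]
        nlinarith
      have hfac : 0 ≤ (π / (2 * q)) * Real.cot x := by positivity
      have hkey : (π / (2 * q)) * Real.cot x ≤ 3 / 2 * (1 / p) := by
        have h1 : (π / (2 * q)) * Real.cot x ≤ (π / (2 * q)) * (1 / x) :=
          mul_le_mul_of_nonneg_left hcotle (by positivity)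
        have h2 : (π / (2 * q)) * (1 / x) = (2 * q + 1) / (2 * q * p) := by
          rw [hxdef]
          field_simp
        have h3 : (2 * (q:ℝ) + 1) / (2 * q * p) ≤ 3 / 2 * (1 / p) := by
          have hq1 : (1:ℝ) ≤ (q:ℝ) := by exact_mod_cast hq
          rw [div_le_iff₀ (by positivity)]
          have hps : 3 / 2 * (1 / p) * (2 * (q:ℝ) * p) = 3 * q := by
            field_simp
          rw [hps]
          linarith
        linarith
      simp only [F, if_pos h, ← hpdef, ← hxdef]
      rw [Real.norm_eq_abs, abs_pow, abs_of_nonneg hfac]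
      exact pow_le_pow_left₀ hfac hkey (2 * n)
    · simp only [F, if_neg h, norm_zero]
      positivity
  have main := tendsto_tsum_of_dominated_convergence hsum hpt hbd
  refine main.congr fun q => ?_
  rw [tsum_eq_sum (s := Finset.range q) (by
    intro k hk
    simp only [Finset.mem_range, not_lt] at hk
    simp only [F]
    rw [if_neg (by omega)])]
  rw [Finset.mul_sum]
  rw [show Finset.Icc 1 q = Finset.Ico 1 (q + 1) by rw [Finset.Ico_add_one_right_eq_Icc],
    Finset.sum_Ico_eq_sum_range]
  simp only [Nat.add_sub_cancel]
  refine Finset.sum_congr rfl fun k hk => ?_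
  have hk' : k + 1 ≤ q := Nat.succ_le_of_lt (Finset.mem_range.mp hk)
  simp only [F, if_pos hk']
  push_cast
  rw [mul_pow]
  ring_nf
end

section
/- For every positive integer n, ζ(2n) = lim_{q→∞} (π/(2q))^{2n} · Σ_{p=1}^{q} csc^{2n}(pπ/(2q+1)). -/
open Real Filter Finset

lemma aux_div_sin : Tendsto (fun x : ℝ => x / Real.sin x) (nhdsWithin 0 {(0:ℝ)}ᶜ) (nhds 1) := by
  have h := Real.hasDerivAt_sin 0
  rw [hasDerivAt_iff_tendsto_slope] at h
  rw [Real.cos_zero] at h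
  have h2 : Tendsto (fun x : ℝ => Real.sin x / x) (nhdsWithin 0 {(0:ℝ)}ᶜ) (nhds 1) := by
    refine h.congr fun x => ?_
    rw [slope_def_field, Real.sin_zero, sub_zero, sub_zero]
  have h3 := h2.inv₀ one_ne_zero
  simpa [inv_div] using h3

lemma aux_denom : Tendsto (fun q : ℕ => 2 * (q : ℝ) + 1) atTop atTop := by
  apply tendsto_atTop_add_const_right
  exact (tendsto_natCast_atTop_atTop).const_mul_atTop two_pos

theorem zeta_even_csc_limit (n : ℕ) (hn : 0 < n) :
    Tendsto (fun q : ℕ =>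
        (π / (2 * q)) ^ (2 * n) *
          ∑ p ∈ Finset.Icc 1 q, ((Real.sin (p * π / (2 * q + 1)))⁻¹) ^ (2 * n))
      atTop (nhds (∑' k : ℕ, 1 / ((k : ℝ) + 1) ^ (2 * n))) := by
  set m := 2 * n with hm
  have hm2 : 2 ≤ m := by omega
  set f : ℕ → ℕ → ℝ := fun q k =>
    if k + 1 ≤ q then
      (π / (2 * q)) ^ m * ((Real.sin (((k : ℝ) + 1) * π / (2 * q + 1)))⁻¹) ^ m
    else 0 with hf
  have key : Tendsto (fun q => ∑' k, f q k) atTop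
      (nhds (∑' k : ℕ, 1 / ((k : ℝ) + 1) ^ m)) := by
    apply tendsto_tsum_of_dominated_convergence
        (bound := fun k : ℕ => (3 * π / 4) ^ m * (1 / ((k : ℝ) + 1) ^ m))
    · -- summable bound
      apply Summable.mul_left
      have h1 : Summable (fun k : ℕ => 1 / ((k : ℝ)) ^ m) :=
        summable_one_div_nat_pow.mpr (by omega)
      have h2 := (summable_nat_add_iff 1).mpr h1
      refine h2.congr fun k => ?_
      push_cast
      ring
    · -- pointwise limit
      intro k
      set c : ℝ := (k : ℝ) + 1 with hc
      have hc0 : (0 : ℝ) < c := by positivity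
      have hθ : Tendsto (fun q : ℕ => c * π / (2 * (q : ℝ) + 1)) atTop
          (nhdsWithin 0 {(0:ℝ)}ᶜ) := by
        rw [tendsto_nhdsWithin_iff]
        constructor
        · exact Tendsto.div_atTop tendsto_const_nhds aux_denom
        · filter_upwards with q
          have : (0 : ℝ) < 2 * (q : ℝ) + 1 := by positivity
          simp only [Set.mem_compl_iff, Set.mem_singleton_iff]
          positivity
      have hsinc : Tendsto (fun q : ℕ =>
          (c * π / (2 * (q : ℝ) + 1)) / Real.sin (c * π / (2 * (q : ℝ) + 1)))
          atTop (nhds 1) := aux_div_sin.comp hθ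
      have hratio : Tendsto (fun q : ℕ => (2 * (q : ℝ) + 1) / (2 * (q : ℝ)))
          atTop (nhds 1) := by
        have h0 : Tendsto (fun q : ℕ => 1 + 1 / (2 * (q : ℝ))) atTop (nhds 1) := by
          have := Tendsto.div_atTop (f := fun _ : ℕ => (1:ℝ))
            (tendsto_const_nhds) ((tendsto_natCast_atTop_atTop).const_mul_atTop two_pos)
          simpa using tendsto_const_nhds.add this
        apply h0.congr'
        filter_upwards [eventually_ge_atTop 1] with q hq
        have hq0 : (0 : ℝ) < (q : ℝ) := by exact_mod_cast hq
        field_simp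
      have hbase : Tendsto (fun q : ℕ =>
          π / (2 * (q : ℝ)) * (Real.sin (c * π / (2 * (q : ℝ) + 1)))⁻¹)
          atTop (nhds (1 / c)) := by
        have h := (hsinc.mul hratio).mul (tendsto_const_nhds (x := 1 / c))
        rw [one_mul, one_mul] at h
        apply h.congr'
        filter_upwards [eventually_ge_atTop 1] with q hq
        have hq0 : (0 : ℝ) < (q : ℝ) := by exact_mod_cast hq
        have hden : (0 : ℝ) < 2 * (q : ℝ) + 1 := by positivity
        rw [div_eq_mul_inv (c * π / (2 * (q : ℝ) + 1))]
        set s := (Real.sin (c * π / (2 * (q : ℝ) + 1)))⁻¹ with hs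
        field_simp
      have hpow := hbase.pow m
      have heq : (1 / c) ^ m = 1 / ((k : ℝ) + 1) ^ m := by
        rw [div_pow, one_pow, hc]
      rw [heq] at hpow
      apply hpow.congr'
      filter_upwards [eventually_ge_atTop (k + 1)] with q hq
      simp only [hf, if_pos hq]
      rw [mul_pow]
    · -- bound
      filter_upwards [eventually_ge_atTop 1] with q hq k
      by_cases hkq : k + 1 ≤ q
      · simp only [hf, if_pos hkq]
        have hq0 : (0 : ℝ) < (q : ℝ) := by exact_mod_cast hq
        have hkqR : ((k : ℝ) + 1) ≤ (q : ℝ) := by exact_mod_cast hkq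
        set c : ℝ := (k : ℝ) + 1 with hc
        have hc0 : (0 : ℝ) < c := by positivity
        have hden : (0 : ℝ) < 2 * (q : ℝ) + 1 := by positivity
        set θ := c * π / (2 * (q : ℝ) + 1) with hθdef
        have hθpos : 0 < θ := by positivity
        have hθle : θ ≤ π / 2 := by
          rw [hθdef, div_le_div_iff₀ hden two_pos]
          nlinarith [pi_pos]
        have hsin : 2 / π * θ ≤ Real.sin θ := Real.mul_le_sin hθpos.le hθle
        have hsinpos : 0 < Real.sin θ := lt_of_lt_of_le (by positivity) hsin
        have hinv : (Real.sin θ)⁻¹ ≤ (2 * (q : ℝ) + 1) / (2 * c) := by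
          have h1 := inv_anti₀ (show (0:ℝ) < 2 / π * θ by positivity) hsin
          refine h1.trans_eq ?_
          rw [hθdef]
          field_simp
        have hbase : π / (2 * (q : ℝ)) * (Real.sin θ)⁻¹ ≤ 3 * π / 4 * (1 / c) := by
          have h2 : π / (2 * (q : ℝ)) * (Real.sin θ)⁻¹ ≤
              π / (2 * (q : ℝ)) * ((2 * (q : ℝ) + 1) / (2 * c)) :=
            mul_le_mul_of_nonneg_left hinv (by positivity)
          refine h2.trans ?_
          rw [div_mul_div_comm, mul_one_div, div_le_div_iff₀ (by positivity) (by positivity)]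
          have hq1 : (1:ℝ) ≤ (q:ℝ) := by exact_mod_cast hq
          nlinarith [mul_le_mul_of_nonneg_left hq1 (mul_pos pi_pos hc0).le]
        have hnn : 0 ≤ π / (2 * (q : ℝ)) * (Real.sin θ)⁻¹ := by positivity
        calc ‖(π / (2 * (q : ℝ))) ^ m * ((Real.sin θ)⁻¹) ^ m‖
            = (π / (2 * (q : ℝ)) * (Real.sin θ)⁻¹) ^ m := by
              rw [← mul_pow, Real.norm_eq_abs, abs_of_nonneg (by positivity)]
          _ ≤ (3 * π / 4 * (1 / c)) ^ m := pow_le_pow_left₀ hnn hbase m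
          _ = (3 * π / 4) ^ m * (1 / ((k : ℝ) + 1) ^ m) := by
              rw [mul_pow, hc, one_div_pow]
      · simp only [hf, if_neg hkq, norm_zero]
        positivity
  apply key.congr
  intro q
  rw [tsum_eq_sum (s := Finset.range q) ?_]
  · rw [Finset.mul_sum, ← Finset.Ico_add_one_right_eq_Icc, Finset.sum_Ico_eq_sum_range]
    apply Finset.sum_congr (by rw [Nat.add_sub_cancel])
    intro k hk
    rw [Finset.mem_range] at hk
    simp only [hf, if_pos (by omega : k + 1 ≤ q)]
    push_cast
    ring_nf
  · intro k hk
    rw [Finset.mem_range, not_lt] at hk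
    simp only [hf, if_neg (by omega : ¬ k + 1 ≤ q)]
end

section
/- For every positive integer n, ζ(2n) = lim_{q→∞} (π/(2q+1))^{2n} · Σ_{p=1}^{q} csc^{2n}(pπ/(2q+1)). -/
open Real Filter Finset

theorem zeta_even_csc_limit_2q1 (n : ℕ) (hn : 0 < n) :
    Tendsto (fun q : ℕ =>
        (π / (2 * q + 1)) ^ (2 * n) *
          ∑ p ∈ Finset.Icc 1 q, ((Real.sin (p * π / (2 * q + 1)))⁻¹) ^ (2 * n))
      atTop (nhds (∑' k : ℕ, 1 / ((k : ℝ) + 1) ^ (2 * n))) := by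
  set F : ℕ → ℕ → ℝ := fun q k =>
    if k + 1 ≤ q then
      ((π / (2 * q + 1)) * (Real.sin (((k : ℝ) + 1) * π / (2 * q + 1)))⁻¹) ^ (2 * n)
    else 0 with hF
  have hQ : ∀ q : ℕ, (0 : ℝ) < 2 * q + 1 := fun q => by positivity
  -- rewrite the finite sum as a tsum
  have key : ∀ q : ℕ,
      (π / (2 * q + 1)) ^ (2 * n) *
          ∑ p ∈ Finset.Icc 1 q, ((Real.sin (p * π / (2 * q + 1)))⁻¹) ^ (2 * n)
        = ∑' k : ℕ, F q k := by
    intro q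
    rw [tsum_eq_sum (s := Finset.range q)
      (by intro k hk; simp only [Finset.mem_range, not_lt] at hk
          simp [hF, Nat.lt_irrefl, show ¬ (k + 1 ≤ q) by omega, show ¬ (k < q) by omega]),
      Finset.mul_sum, show Finset.Icc 1 q = Finset.Ico 1 (q+1) from (Finset.Ico_add_one_right_eq_Icc ..).symm,
      Finset.sum_Ico_eq_sum_range]
    simp only [Nat.add_sub_cancel]
    refine Finset.sum_congr rfl fun k hk => ?_
    rw [Finset.mem_range] at hk
    rw [hF]
    simp only [show k + 1 ≤ q by omega, if_pos]
    rw [mul_pow]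
    push_cast
    ring_nf
  simp only [funext key]
  -- dominated convergence
  have hsum : Summable (fun k : ℕ => (π / (2 * ((k : ℝ) + 1))) ^ (2 * n)) := by
    have h1 : Summable (fun k : ℕ => 1 / ((k : ℝ) + 1) ^ (2 * n)) := by
      have := (summable_nat_add_iff (f := fun k : ℕ => 1 / (k : ℝ) ^ (2 * n)) 1).2
        (summable_one_div_nat_pow.mpr (by omega))
      simpa using this
    have := h1.mul_left ((π / 2) ^ (2 * n))
    refine this.congr fun k => ?_
    rw [div_pow, div_pow, mul_one_div, div_div, ← mul_pow]
  refine tendsto_tsum_of_dominated_convergence hsum ?_ ?_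
  · -- pointwise convergence
    intro k
    set c : ℝ := (k : ℝ) + 1 with hc
    have hcpos : 0 < c := by positivity
    have h0 : Tendsto (fun q : ℕ => c * π / (2 * q + 1)) atTop (nhdsWithin 0 {x | x ≠ 0}) := by
      refine tendsto_nhdsWithin_of_tendsto_nhds_of_eventually_within _ ?_ ?_
      · have h1 : Tendsto (fun q : ℕ => (2 * (q : ℝ) + 1)) atTop atTop :=
          tendsto_atTop_add_const_right _ 1
            ((tendsto_natCast_atTop_atTop (R := ℝ)).const_mul_atTop two_pos)
        have := Tendsto.div_atTop (f := fun _ : ℕ => c * π) tendsto_const_nhds h1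
        refine this.congr fun q => by push_cast; ring_nf
      · filter_upwards with q
        have : 0 < c * π / (2 * q + 1) := by positivity
        exact ne_of_gt this
    have hsin : Tendsto (fun x : ℝ => Real.sin x / x) (nhdsWithin 0 {x | x ≠ 0}) (nhds 1) := by
      have := (Real.hasDerivAt_sin 0)
      rw [hasDerivAt_iff_tendsto_slope] at this
      simp only [Real.cos_zero] at this
      refine this.congr fun x => ?_
      simp [slope_fun_def, Real.sin_zero, div_eq_inv_mul]
    have h2 : Tendsto (fun q : ℕ => Real.sin (c * π / (2 * q + 1)) / (c * π / (2 * q + 1)))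
        atTop (nhds 1) := hsin.comp h0
    have h3 : Tendsto (fun q : ℕ => (c * π / (2 * q + 1)) / Real.sin (c * π / (2 * q + 1)))
        atTop (nhds 1) := by
      have := h2.inv₀ one_ne_zero
      simp only [inv_div, inv_one] at this
      exact this
    have h4 : Tendsto (fun q : ℕ =>
        ((c * π / (2 * q + 1)) / Real.sin (c * π / (2 * q + 1)) * c⁻¹) ^ (2 * n))
        atTop (nhds ((1 * c⁻¹) ^ (2 * n))) := (h3.mul_const c⁻¹).pow (2 * n)
    have hval : (1 * c⁻¹ : ℝ) ^ (2 * n) = 1 / c ^ (2 * n) := by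
      rw [one_mul, inv_pow, one_div]
    rw [hval] at h4
    refine Tendsto.congr' ?_ h4
    filter_upwards [eventually_ge_atTop (k + 1)] with q hq
    rw [hF]
    simp only [hq, if_pos]
    congr 1
    have hs : Real.sin (c * π / (2 * q + 1)) ≠ 0 := by
      refine ne_of_gt (Real.sin_pos_of_pos_of_lt_pi (by positivity) ?_)
      rw [div_lt_iff₀ (hQ q)]
      have hcle : c ≤ q := by
        rw [hc]; exact_mod_cast Nat.cast_le.mpr hq |>.trans_eq (by push_cast; ring)
      nlinarith [Real.pi_pos]
    rw [← hc]
    field_simp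
  · -- bound
    filter_upwards with q
    intro k
    rw [hF]
    by_cases hq : k + 1 ≤ q
    · simp only [hq, if_pos]
      set t : ℝ := ((k : ℝ) + 1) * π / (2 * q + 1) with ht
      have ht0 : 0 < t := by positivity
      have ht2 : t ≤ π / 2 := by
        rw [ht, div_le_div_iff₀ (hQ q) two_pos]
        have : ((k : ℝ) + 1) * 2 ≤ 2 * q + 1 := by
          have : (k : ℝ) + 1 ≤ q := by exact_mod_cast hq
          linarith
        nlinarith [Real.pi_pos]
      have hsin_ge : 2 * ((k : ℝ) + 1) / (2 * q + 1) ≤ Real.sin t := by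
        have := Real.mul_le_sin ht0.le ht2
        calc 2 * ((k : ℝ) + 1) / (2 * q + 1) = 2 / π * t := by
              rw [ht]; field_simp
          _ ≤ Real.sin t := this
      have hb0 : (0 : ℝ) < 2 * ((k : ℝ) + 1) / (2 * q + 1) := by positivity
      have hsinpos : 0 < Real.sin t := lt_of_lt_of_le hb0 hsin_ge
      have hinv : (Real.sin t)⁻¹ ≤ (2 * q + 1) / (2 * ((k : ℝ) + 1)) := by
        have := inv_anti₀ hb0 hsin_ge
        rwa [inv_div] at this
      have hbase : π / (2 * q + 1) * (Real.sin t)⁻¹ ≤ π / (2 * ((k : ℝ) + 1)) := by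
        calc π / (2 * q + 1) * (Real.sin t)⁻¹
            ≤ π / (2 * q + 1) * ((2 * q + 1) / (2 * ((k : ℝ) + 1))) := by
              refine mul_le_mul_of_nonneg_left hinv (by positivity)
          _ = π / (2 * ((k : ℝ) + 1)) := by field_simp
      have hbase0 : 0 ≤ π / (2 * q + 1) * (Real.sin t)⁻¹ := by positivity
      rw [Real.norm_eq_abs, abs_of_nonneg (by positivity)]
      exact pow_le_pow_left₀ hbase0 hbase (2 * n)
    · simp only [hq, if_neg, not_false_iff]
      simp only [norm_zero]
      positivity
end
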